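/- For every real I with 0 < I < 1, the spiking period of the integrate-and-fire model with f(x) = e^{√(2|x|)} − 1, threshold +∞ and reset −∞, satisfies ∫_{−∞}^{∞} dx / (e^{√(2|x|)} − 1 + I) = (2/(1−I)) · Σ_{n=1}^{∞} (1−I)^n / n²; equivalently its firing rate is r(I) = (1−I) / (2·Li₂(1−I)), where Li₂(q) = Σ_{n=1}^{∞} qⁿ/n² is the dilogarithm. -/

import Mathlib

open MeasureTheory Set Real

lemma intAux (c : ℝ) (hc : 0 < c) : ∫ u in Ioi (0:ℝ), u * Real.exp (-(c*u)) = 1/c^2 := by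
  have h := Real.integral_rpow_mul_exp_neg_mul_Ioi (by norm_num : (0:ℝ) < 2) hc
  norm_num at h
  rw [h, one_div]

lemma intOnAux (c : ℝ) (hc : 0 < c) : IntegrableOn (fun u : ℝ => u * Real.exp (-(c*u))) (Ioi 0) := by
  have h := integrableOn_rpow_mul_exp_neg_mul_rpow (by norm_num : (-1:ℝ) < 1) (by norm_num : (0:ℝ) < 1) hc
  refine h.congr_fun (fun x hx => ?_) measurableSet_Ioi
  simp [Real.rpow_one]

/-- For every real `I` with `0 < I < 1`, the spiking period of
the integrate-and-fire model with `f x = exp (√(2|x|)) - 1`, threshold `+∞`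
and reset `-∞`, satisfies
`∫ x in ℝ, 1 / (exp (√(2|x|)) - 1 + I) = (2 / (1 - I)) * Σ_{n=1}^∞ (1-I)^n / n²`;
equivalently its firing rate is `r I = (1 - I) / (2 * Li₂ (1 - I))`, where
`Li₂ q = Σ_{n=1}^∞ qⁿ / n²` is the dilogarithm. -/
theorem exp_sqrt_IF_period (I : ℝ) (hI0 : 0 < I) (hI1 : I < 1) :
    ∫ x : ℝ, 1 / (Real.exp (Real.sqrt (2 * |x|)) - 1 + I)
      = (2 / (1 - I)) *
          ∑' n : ℕ, (1 - I) ^ (n + 1) / ((n : ℝ) + 1) ^ 2 := by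
  set q : ℝ := 1 - I with hq
  have hq0 : 0 < q := by simp only [hq]; linarith
  have hq1 : q < 1 := by simp only [hq]; linarith
  -- Step A: fold |x| and halve
  rw [show (∫ x : ℝ, 1 / (Real.exp (Real.sqrt (2 * |x|)) - 1 + I))
      = 2 * ∫ x in Ioi (0:ℝ), 1 / (Real.exp (Real.sqrt (2 * x)) - 1 + I) from
    integral_comp_abs (f := fun y => 1 / (Real.exp (Real.sqrt (2 * y)) - 1 + I))]
  -- Step B: change of variables x = u^2/2
  have himg : Ioi (0:ℝ) = (fun u : ℝ => u^2/2) '' Ioi 0 := by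
    ext x
    constructor
    · intro hx
      refine ⟨Real.sqrt (2*x), Real.sqrt_pos.2 (by linarith [mem_Ioi.1 hx]), ?_⟩
      simp only
      rw [Real.sq_sqrt (by linarith [mem_Ioi.1 hx])]
      ring
    · rintro ⟨u, hu, rfl⟩
      have : (0:ℝ) < u := hu
      simp only [mem_Ioi]
      positivity
  have hder : ∀ u ∈ Ioi (0:ℝ), HasDerivWithinAt (fun u : ℝ => u^2/2) u (Ioi 0) u := by
    intro u _
    have := (hasDerivAt_pow 2 u).div_const 2
    simpa using this.hasDerivWithinAt
  have hinj : InjOn (fun u : ℝ => u^2/2) (Ioi 0) := by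
    intro a ha b hb h
    simp only at h
    have h2 : a^2 = b^2 := by linarith
    calc a = Real.sqrt (a^2) := (Real.sqrt_sq (le_of_lt ha)).symm
    _ = Real.sqrt (b^2) := by rw [h2]
    _ = b := Real.sqrt_sq (le_of_lt hb)
  rw [show (∫ x in Ioi (0:ℝ), 1 / (Real.exp (Real.sqrt (2 * x)) - 1 + I))
      = ∫ u in Ioi (0:ℝ), |u| • (1 / (Real.exp (Real.sqrt (2 * (u^2/2))) - 1 + I)) by
    conv_lhs => rw [himg]
    exact integral_image_eq_integral_abs_deriv_smul measurableSet_Ioi hder hinj _]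
  -- Step C: rewrite the integrand as a geometric series
  have hcong : ∀ u ∈ Ioi (0:ℝ),
      |u| • (1 / (Real.exp (Real.sqrt (2 * (u^2/2))) - 1 + I))
        = ∑' n : ℕ, q ^ n * (u * Real.exp (-(((n:ℝ)+1)*u))) := by
    intro u hu
    have hu0 : 0 < u := hu
    have hsq : Real.sqrt (2 * (u^2/2)) = u := by
      rw [show 2 * (u^2/2) = u^2 by ring, Real.sqrt_sq hu0.le]
    rw [hsq, abs_of_pos hu0, smul_eq_mul]
    have heu : 1 < Real.exp u := by
      rw [← Real.exp_zero]; exact Real.exp_lt_exp.2 hu0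
    have hx1 : q * Real.exp (-u) < 1 := by
      have : Real.exp (-u) < 1 := by rw [← Real.exp_zero]; exact Real.exp_lt_exp.2 (by linarith)
      nlinarith [Real.exp_pos (-u)]
    have hx0 : 0 ≤ q * Real.exp (-u) := by positivity
    have hg : ∑' n : ℕ, (q * Real.exp (-u))^n = (1 - q * Real.exp (-u))⁻¹ :=
      tsum_geometric_of_lt_one hx0 hx1
    have hterm : ∀ n : ℕ, q ^ n * (u * Real.exp (-(((n:ℝ)+1)*u)))
        = (u * Real.exp (-u)) * (q * Real.exp (-u))^n := by
      intro n
      have hE : Real.exp (-(((n:ℝ)+1)*u)) = Real.exp (-u) * (Real.exp (-u))^n := by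
        rw [← Real.exp_nat_mul, ← Real.exp_add]
        congr 1
        ring
      rw [hE, mul_pow]
      ring
    rw [tsum_congr hterm, tsum_mul_left, hg]
    have hne : Real.exp u - q > 0 := by linarith
    have hden : Real.exp u - 1 + I = Real.exp u - q := by rw [hq]; ring
    rw [hden]
    have h2 : 1 - q * Real.exp (-u) > 0 := by linarith
    rw [Real.exp_neg]
    have hE := Real.exp_pos u
    field_simp
  rw [setIntegral_congr_fun measurableSet_Ioi hcong]
  -- Step D: swap integral and sum
  have hsumm : Summable (fun n : ℕ => q ^ n / ((n:ℝ)+1)^2) := by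
    refine Summable.of_nonneg_of_le (fun n => by positivity) (fun n => ?_)
      (summable_geometric_of_lt_one hq0.le hq1)
    have h1 : (1:ℝ) ≤ ((n:ℝ)+1)^2 := by nlinarith [Nat.cast_nonneg (α := ℝ) n]
    rw [div_le_iff₀ (by positivity)]
    nlinarith [pow_nonneg hq0.le n]
  have hIval : ∀ n : ℕ, ∫ u in Ioi (0:ℝ), q ^ n * (u * Real.exp (-(((n:ℝ)+1)*u)))
      = q ^ n / ((n:ℝ)+1)^2 := by
    intro n
    rw [MeasureTheory.integral_const_mul, intAux ((n:ℝ)+1) (by positivity)]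
    ring
  have hlint : ∀ n : ℕ, ∫⁻ u in Ioi (0:ℝ), ‖q ^ n * (u * Real.exp (-(((n:ℝ)+1)*u)))‖ₑ
      = ENNReal.ofReal (q ^ n / ((n:ℝ)+1)^2) := by
    intro n
    rw [← hIval n, MeasureTheory.ofReal_integral_eq_lintegral_ofReal
      (((intOnAux ((n:ℝ)+1) (by positivity)).const_mul _))
      (by filter_upwards [ae_restrict_mem measurableSet_Ioi] with u hu
          have : (0:ℝ) < u := hu
          positivity)]
    refine lintegral_congr_ae ?_
    filter_upwards [ae_restrict_mem measurableSet_Ioi] with u hu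
    have : (0:ℝ) < u := hu
    exact Real.enorm_eq_ofReal (by positivity)
  have hswap : ∫ u in Ioi (0:ℝ), ∑' n : ℕ, q ^ n * (u * Real.exp (-(((n:ℝ)+1)*u)))
      = ∑' n : ℕ, ∫ u in Ioi (0:ℝ), q ^ n * (u * Real.exp (-(((n:ℝ)+1)*u))) := by
    refine MeasureTheory.integral_tsum (fun n => ?_) ?_
    · exact Continuous.aestronglyMeasurable (by fun_prop)
    · rw [tsum_congr hlint,
        ← ENNReal.ofReal_tsum_of_nonneg (fun n => by positivity) hsumm]
      exact ENNReal.ofReal_ne_top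
  rw [hswap, tsum_congr hIval]
  -- Final algebra
  have hfin : ∑' n : ℕ, q ^ (n + 1) / ((n : ℝ) + 1) ^ 2 = q * ∑' n : ℕ, q ^ n / ((n:ℝ)+1)^2 := by
    rw [← tsum_mul_left]
    exact tsum_congr fun n => by rw [pow_succ]; ring
  rw [hfin]
  field_simp
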